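/- Let E ⊆ ℤ^d be finite, n ≥ 1, and A a finite alphabet. Suppose J is a set of pairs of n-cubes contained in E and w is a pattern on E ∖ A(J), where A(J) is the union of the second components of pairs in J. Then there is at most one pattern u ∈ A^E such that u restricted to E ∖ A(J) equals w and J is an n-repeat cover for u. -/

import Mathlib

/-- Pointwise addition of points in `ℤ^d`. -/
def ptAdd {d : ℕ} (v t : Fin d → ℤ) : Fin d → ℤ := fun i => v i + t i

/-- `inCube n t` means `t` lies in the cube `[0, n)^d` of offsets. -/
def inCube {d : ℕ} (n : ℕ) (t : Fin d → ℤ) : Prop := ∀ i, 0 ≤ t i ∧ t i < n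

/-- The `n`-cube (translate of `F_n`) with corner `v`. -/
def cubeSet {d : ℕ} (n : ℕ) (v : Fin d → ℤ) : Set (Fin d → ℤ) :=
  {x | ∀ i, v i ≤ x i ∧ x i < v i + n}

/-- The `n`-cube with corner `v` is contained in `E`. -/
def cubeIn {d : ℕ} (n : ℕ) (E : Set (Fin d → ℤ)) (v : Fin d → ℤ) : Prop :=
  cubeSet n v ⊆ E

/-- The `n`-cube subpatterns of `u` at corners `v₁` and `v₂` coincide (up to translation). -/
def samePat {A : Type*} {d : ℕ} (n : ℕ) (u : (Fin d → ℤ) → A) (v₁ v₂ : Fin d → ℤ) : Prop :=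
  ∀ t : Fin d → ℤ, inCube n t → u (ptAdd v₁ t) = u (ptAdd v₂ t)

/-- Lexicographic (strict) order on `ℤ^d`. -/
def lexLt {d : ℕ} (p q : Fin d → ℤ) : Prop :=
  ∃ i : Fin d, (∀ j < i, p j = q j) ∧ p i < q i

/-- Lexicographic order on `ℤ^d`. -/
def lexLe {d : ℕ} (p q : Fin d → ℤ) : Prop := lexLt p q ∨ p = q

/-- `(v₁, v₂)` (identified with the pair of `n`-cubes at these corners) is an `n`-repeat in
the pattern `u` on `E`: both cubes lie in `E`, they are distinct, they carry the same
subpattern of `u`, and `v₁` is the lexicographically minimal occurrence of that subpattern. -/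
def IsRepeat {A : Type*} {d : ℕ} (n : ℕ) (E : Set (Fin d → ℤ)) (u : (Fin d → ℤ) → A)
    (v₁ v₂ : Fin d → ℤ) : Prop :=
  cubeIn n E v₁ ∧ cubeIn n E v₂ ∧ v₁ ≠ v₂ ∧ samePat n u v₁ v₂ ∧
    ∀ v, cubeIn n E v → samePat n u v v₁ → lexLe v₁ v

/-- `A(J)`: the union of the second cubes of the pairs in `J`. -/
def repArea {d : ℕ} (n : ℕ) (J : Set ((Fin d → ℤ) × (Fin d → ℤ))) : Set (Fin d → ℤ) :=
  ⋃ p ∈ J, cubeSet n p.2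

/-- `J` is an `n`-repeat cover for `u` on `E`: each pair in `J` is an `n`-repeat in `u`,
and the second cube of every `n`-repeat in `u` is contained in `A(J)`. -/
def IsRepeatCover {A : Type*} {d : ℕ} (n : ℕ) (E : Set (Fin d → ℤ)) (u : (Fin d → ℤ) → A)
    (J : Set ((Fin d → ℤ) × (Fin d → ℤ))) : Prop :=
  (∀ p ∈ J, IsRepeat n E u p.1 p.2) ∧
  (∀ v₁ v₂, IsRepeat n E u v₁ v₂ → cubeSet n v₂ ⊆ repArea n J)

theorem lexLt_iff_toLex_lt {d : ℕ} (p q : Fin d → ℤ) :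
    lexLt p q ↔ toLex p < toLex q := Iff.rfl

theorem stmt10' {A : Type*} {d n : ℕ} (hn : 1 ≤ n)
    (E : Set (Fin d → ℤ)) (hE : E.Finite)
    (J : Set ((Fin d → ℤ) × (Fin d → ℤ))) (w : (Fin d → ℤ) → A)
    (u u' : (Fin d → ℤ) → A)
    (hu : ∀ x ∈ E \ repArea n J, u x = w x) (hu' : ∀ x ∈ E \ repArea n J, u' x = w x)
    (hc : IsRepeatCover n E u J) (hc' : IsRepeatCover n E u' J) :
    ∀ x ∈ E, u x = u' x := by
  -- the set of disagreement points
  set X : Set (Fin d → ℤ) := {x | x ∈ E ∧ u x ≠ u' x} with hX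
  -- key step: every disagreement point has a lex-smaller disagreement point
  have key : ∀ x ∈ X, ∃ y ∈ X, lexLt y x := by
    rintro x ⟨hxE, hxne⟩
    have hxA : x ∈ repArea n J := by
      by_contra hxa
      exact hxne ((hu x ⟨hxE, hxa⟩).trans (hu' x ⟨hxE, hxa⟩).symm)
    rw [repArea, Set.mem_iUnion₂] at hxA
    obtain ⟨p, hp, hxp⟩ := hxA
    obtain ⟨h1, h2, hne, hsp, hmin⟩ := hc.1 p hp
    obtain ⟨h1', h2', hne', hsp', hmin'⟩ := hc'.1 p hp
    set t : Fin d → ℤ := fun i => x i - p.2 i with ht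
    have htc : inCube n t := fun i => ⟨by simp [ht, (hxp i).1], by
      have := (hxp i).2; simp [ht]; omega⟩
    have hx2 : ptAdd p.2 t = x := by funext i; simp [ptAdd, ht]
    set y : Fin d → ℤ := ptAdd p.1 t with hy
    have huy : u y = u x := by rw [hy, ← hx2]; exact hsp t htc
    have huy' : u' y = u' x := by rw [hy, ← hx2]; exact hsp' t htc
    have hyE : y ∈ E := h1 (fun i => by
      have h := htc i; simp only [hy, ptAdd]; omega)
    -- v₁ is lex-smaller than v₂
    have hlt : lexLt p.1 p.2 := by
      have hsym : samePat n u p.2 p.1 := fun s hs => (hsp s hs).symm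
      rcases hmin p.2 h2 hsym with h | h
      · exact h
      · exact absurd h hne
    obtain ⟨i, hji, hii⟩ := hlt
    refine ⟨y, ⟨hyE, by rw [huy, huy']; exact hxne⟩, ⟨i, fun j hj => ?_, ?_⟩⟩
    · simp [hy, ptAdd, ht, hji j hj]
    · simp [hy, ptAdd, ht]; omega
  -- conclude by finiteness / minimality in the lex order
  intro x hx
  by_contra hne
  have hXfin : X.Finite := hE.subset (fun z hz => hz.1)
  have hXne : X.Nonempty := ⟨x, hx, hne⟩
  obtain ⟨a, haX, hamin⟩ :=
    Set.Finite.exists_minimalFor (toLex : (Fin d → ℤ) → Lex (Fin d → ℤ)) X hXfin hXne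
  obtain ⟨y, hyX, hylt⟩ := key a haX
  rw [lexLt_iff_toLex_lt] at hylt
  exact absurd (hamin hyX hylt.le) (not_le.mpr hylt)

/-- A pattern `u` on finite `E ⊆ ℤ^d` is uniquely determined by an `n`-repeat cover `J`
and its restriction to `E ∖ A(J)`. -/
theorem stmt10 {A : Type*} {d n : ℕ} (hn : 1 ≤ n)
    (E : Set (Fin d → ℤ)) (hE : E.Finite)
    (J : Set ((Fin d → ℤ) × (Fin d → ℤ))) (w : (Fin d → ℤ) → A)
    (u u' : (Fin d → ℤ) → A)
    (hu : ∀ x ∈ E \ repArea n J, u x = w x) (hu' : ∀ x ∈ E \ repArea n J, u' x = w x)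
    (hc : IsRepeatCover n E u J) (hc' : IsRepeatCover n E u' J) :
    ∀ x ∈ E, u x = u' x :=
  stmt10' hn E hE J w u u' hu hu' hc hc'
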